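/- Let $q\ge 1$ and $u\in L^q(\mathbb{R}^N,\mathbb{R}^d)$. Then for every $\varepsilon>0$ and every unit vector $\vec{k}\in S^{N-1}$, $$\int_{\mathbb{R}^N}\frac{1}{\varepsilon}\big|u(x+\varepsilon\vec{k})-u(x)\big|^q\,dx\ \le\ \frac{2^{N+q}}{\mathcal{L}^N(B_1(0))}\int_{B_1(0)}\int_{\mathbb{R}^N}\frac{1}{\varepsilon|z|}\big|u(x+\varepsilon z)-u(x)\big|^q\,dx\,dz.$$ -/

import Mathlib

open MeasureTheory Metric Set Filter Topology
open scoped ENNReal NNReal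

noncomputable section

theorem stmt2 (N d : ℕ) (q : ℝ) (hq : 1 ≤ q)
    (u : EuclideanSpace ℝ (Fin N) → EuclideanSpace ℝ (Fin d))
    (hu : MemLp u (ENNReal.ofReal q) volume)
    (ε : ℝ) (hε : 0 < ε)
    (k : EuclideanSpace ℝ (Fin N)) (hk : ‖k‖ = 1) :
    (∫⁻ x, ENNReal.ofReal (‖u (x + ε • k) - u x‖ ^ q)) / ENNReal.ofReal ε ≤
      (ENNReal.ofReal ((2 : ℝ) ^ ((N : ℝ) + q)) /
          volume (ball (0 : EuclideanSpace ℝ (Fin N)) 1)) *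
        ∫⁻ z in ball (0 : EuclideanSpace ℝ (Fin N)) 1,
          (∫⁻ x, ENNReal.ofReal (‖u (x + ε • z) - u x‖ ^ q)) /
            ENNReal.ofReal (ε * ‖z‖) := by
  classical
  have h0q : (0:ℝ) ≤ q := le_trans zero_le_one hq
  haveI : Nontrivial (EuclideanSpace ℝ (Fin N)) :=
    nontrivial_of_ne k 0 (fun h => by simp [h] at hk)
  set e := ENNReal.ofReal ε with he
  have he0 : e ≠ 0 := by simp [he, hε]
  have heT : e ≠ ∞ := ENNReal.ofReal_ne_top
  obtain ⟨v, hv, huv⟩ : ∃ v : EuclideanSpace ℝ (Fin N) → EuclideanSpace ℝ (Fin d),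
      StronglyMeasurable v ∧ u =ᵐ[volume] v :=
    ⟨hu.1.mk, hu.1.stronglyMeasurable_mk, hu.1.ae_eq_mk⟩
  have hvm : Measurable v := hv.measurable
  set F : EuclideanSpace ℝ (Fin N) → ℝ≥0∞ :=
    fun w => ∫⁻ x, ENNReal.ofReal (‖v (x + ε • w) - v x‖ ^ q) with hFdef
  -- replacing u by its measurable representative
  have hFeq : ∀ w : EuclideanSpace ℝ (Fin N),
      (∫⁻ x, ENNReal.ofReal (‖u (x + ε • w) - u x‖ ^ q)) = F w := by
    intro w
    refine lintegral_congr_ae ?_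
    have h1 : (fun x : EuclideanSpace ℝ (Fin N) => u (x + ε • w)) =ᵐ[volume]
        fun x => v (x + ε • w) :=
      (measurePreserving_add_right volume (ε • w)).quasiMeasurePreserving.ae_eq_comp huv
    filter_upwards [huv, h1] with x h2 h3
    rw [h2, show u (x + ε • w) = v (x + ε • w) from h3]
  -- measurability of F
  have hmeas : Measurable F := by
    apply Measurable.lintegral_prod_right (f := fun (w x : EuclideanSpace ℝ (Fin N)) =>
      ENNReal.ofReal (‖v (x + ε • w) - v x‖ ^ q))
    exact ENNReal.measurable_ofReal.comp ((Real.continuous_rpow_const h0q).measurable.comp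
      (((hvm.comp (measurable_snd.add (measurable_fst.const_smul ε))).sub
        (hvm.comp measurable_snd)).norm))
  -- the pointwise splitting inequality
  have key : ∀ z : EuclideanSpace ℝ (Fin N), F k ≤ 2 ^ (q - 1) * (F (k - z) + F z) := by
    intro z
    have hpt : ∀ x : EuclideanSpace ℝ (Fin N), ENNReal.ofReal (‖v (x + ε • k) - v x‖ ^ q) ≤
        2 ^ (q - 1) * (ENNReal.ofReal (‖v (x + ε • k) - v (x + ε • z)‖ ^ q)
          + ENNReal.ofReal (‖v (x + ε • z) - v x‖ ^ q)) := by
      intro x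
      set a := ‖v (x + ε • k) - v (x + ε • z)‖ with ha
      set b := ‖v (x + ε • z) - v x‖ with hb
      have htri : ‖v (x + ε • k) - v x‖ ≤ a + b := norm_sub_le_norm_sub_add_norm_sub _ _ _
      calc ENNReal.ofReal (‖v (x + ε • k) - v x‖ ^ q)
          ≤ ENNReal.ofReal ((a + b) ^ q) :=
            ENNReal.ofReal_le_ofReal (Real.rpow_le_rpow (norm_nonneg _) htri h0q)
        _ = (ENNReal.ofReal a + ENNReal.ofReal b) ^ q := by
            rw [← ENNReal.ofReal_rpow_of_nonneg (by positivity) h0q,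
              ENNReal.ofReal_add (norm_nonneg _) (norm_nonneg _)]
        _ ≤ 2 ^ (q - 1) * ((ENNReal.ofReal a) ^ q + (ENNReal.ofReal b) ^ q) :=
            ENNReal.rpow_add_le_mul_rpow_add_rpow _ _ hq
        _ = _ := by
            rw [ENNReal.ofReal_rpow_of_nonneg (norm_nonneg _) h0q,
              ENNReal.ofReal_rpow_of_nonneg (norm_nonneg _) h0q]
    have hc : (2:ℝ≥0∞) ^ (q - 1) ≠ ∞ :=
      ENNReal.rpow_ne_top_of_nonneg (by linarith) ENNReal.ofNat_ne_top
    have hmeas1 : AEMeasurable (fun x : EuclideanSpace ℝ (Fin N) =>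
        ENNReal.ofReal (‖v (x + ε • k) - v (x + ε • z)‖ ^ q)) volume := by
      refine Measurable.aemeasurable ?_
      exact ENNReal.measurable_ofReal.comp ((Real.continuous_rpow_const h0q).measurable.comp
        (((hvm.comp (measurable_add_const (ε • k))).sub
          (hvm.comp (measurable_add_const (ε • z)))).norm))
    have hxy : ∀ x : EuclideanSpace ℝ (Fin N), x + ε • z + ε • (k - z) = x + ε • k := by
      intro x; rw [smul_sub]; abel
    calc F k ≤ ∫⁻ x, 2 ^ (q - 1) * (ENNReal.ofReal (‖v (x + ε • k) - v (x + ε • z)‖ ^ q)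
          + ENNReal.ofReal (‖v (x + ε • z) - v x‖ ^ q)) := lintegral_mono hpt
      _ = 2 ^ (q - 1) * ((∫⁻ x, ENNReal.ofReal (‖v (x + ε • k) - v (x + ε • z)‖ ^ q)) + F z) := by
          rw [lintegral_const_mul' _ _ hc, lintegral_add_left' hmeas1]
      _ = 2 ^ (q - 1) * (F (k - z) + F z) := by
          have hsub := lintegral_add_right_eq_self (μ := volume)
            (fun y : EuclideanSpace ℝ (Fin N) =>
              ENNReal.ofReal (‖v (y + ε • (k - z)) - v y‖ ^ q)) (ε • z)
          have hGz : (∫⁻ x, ENNReal.ofReal (‖v (x + ε • k) - v (x + ε • z)‖ ^ q)) = F (k - z) := by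
            calc (∫⁻ x, ENNReal.ofReal (‖v (x + ε • k) - v (x + ε • z)‖ ^ q))
                = ∫⁻ x, ENNReal.ofReal (‖v (x + ε • z + ε • (k - z)) - v (x + ε • z)‖ ^ q) :=
                  lintegral_congr fun x => by rw [hxy x]
              _ = F (k - z) := hsub
          rw [hGz]
  -- the half ball
  set B : Set (EuclideanSpace ℝ (Fin N)) := ball ((2:ℝ)⁻¹ • k) 2⁻¹ with hB
  have hsym : ∀ z : EuclideanSpace ℝ (Fin N),
      dist (k - z) ((2:ℝ)⁻¹ • k) = dist z ((2:ℝ)⁻¹ • k) := by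
    intro z
    have h1 : k - z - (2:ℝ)⁻¹ • k = -(z - (2:ℝ)⁻¹ • k) := by
      module
    rw [dist_eq_norm, dist_eq_norm, h1, norm_neg]
  have hpre : (fun z : EuclideanSpace ℝ (Fin N) => k - z) ⁻¹' B = B := by
    ext z
    simp only [hB, mem_preimage, mem_ball]
    rw [hsym z]
  have hBsub : B ⊆ ball (0 : EuclideanSpace ℝ (Fin N)) 1 := by
    refine ball_subset_ball' ?_
    have : dist ((2:ℝ)⁻¹ • k) (0 : EuclideanSpace ℝ (Fin N)) = 2⁻¹ := by
      rw [dist_zero_right, norm_smul, hk]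
      norm_num
    rw [this]; norm_num
  have hvolB : volume B =
      ENNReal.ofReal ((2:ℝ)⁻¹ ^ N) * volume (ball (0 : EuclideanSpace ℝ (Fin N)) 1) := by
    rw [hB, Measure.addHaar_ball volume ((2:ℝ)⁻¹ • k) (by norm_num : (0:ℝ) ≤ 2⁻¹)]
    congr 2
    rw [finrank_euclideanSpace_fin]
  set V := volume (ball (0 : EuclideanSpace ℝ (Fin N)) 1) with hV
  have hV0 : V ≠ 0 := (measure_ball_pos volume 0 one_pos).ne'
  have hVT : V ≠ ∞ := measure_ball_lt_top.ne
  set J := ∫⁻ z in ball (0 : EuclideanSpace ℝ (Fin N)) 1, F z with hJ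
  -- averaged inequality
  have havg : F k * (ENNReal.ofReal ((2:ℝ)⁻¹ ^ N) * V) ≤ 2 ^ q * J := by
    have hc : (2:ℝ≥0∞) ^ (q - 1) ≠ ∞ :=
      ENNReal.rpow_ne_top_of_nonneg (by linarith) ENNReal.ofNat_ne_top
    have h1 : F k * volume B ≤ ∫⁻ z in B, 2 ^ (q - 1) * (F (k - z) + F z) := by
      rw [← setLIntegral_const B (F k)]
      exact lintegral_mono fun z => key z
    have hmeaskz : AEMeasurable (fun z : EuclideanSpace ℝ (Fin N) => F (k - z))
        (volume.restrict B) :=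
      ((hmeas.comp (measurable_const.sub measurable_id)).aemeasurable)
    have h2 : (∫⁻ z in B, 2 ^ (q - 1) * (F (k - z) + F z)) =
        2 ^ (q - 1) * ((∫⁻ z in B, F (k - z)) + ∫⁻ z in B, F z) := by
      rw [lintegral_const_mul' _ _ hc, lintegral_add_left' hmeaskz]
    have h3 : (∫⁻ z in B, F (k - z)) = ∫⁻ z in B, F z := by
      have hmp : MeasurePreserving (fun z : EuclideanSpace ℝ (Fin N) => k - z) volume volume :=
        Measure.measurePreserving_sub_left volume k
      have h := hmp.setLIntegral_comp_preimage_emb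
        (MeasurableEquiv.subLeft k).measurableEmbedding F B
      rwa [show (fun z : EuclideanSpace ℝ (Fin N) => k - z) ⁻¹' B = B from hpre] at h
    have h4 : (∫⁻ z in B, F z) ≤ J := lintegral_mono_set hBsub
    have h5 : (2:ℝ≥0∞) ^ (q - 1) * 2 ^ (1:ℝ) = 2 ^ q := by
      rw [← ENNReal.rpow_add _ _ two_ne_zero ENNReal.ofNat_ne_top]
      norm_num
    calc F k * (ENNReal.ofReal ((2:ℝ)⁻¹ ^ N) * V) = F k * volume B := by rw [hvolB]
      _ ≤ 2 ^ (q - 1) * ((∫⁻ z in B, F (k - z)) + ∫⁻ z in B, F z) := h1.trans (le_of_eq h2)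
      _ = 2 ^ (q - 1) * 2 ^ (1:ℝ) * (∫⁻ z in B, F z) := by
          rw [h3, ENNReal.rpow_one]; ring
      _ ≤ 2 ^ q * J := by rw [h5]; exact mul_le_mul_right h4 _
  -- constant manipulations
  have hhalf : ENNReal.ofReal ((2:ℝ)⁻¹ ^ N) = ((2:ℝ≥0∞) ^ N)⁻¹ := by
    rw [ENNReal.ofReal_pow (by norm_num : (0:ℝ) ≤ 2⁻¹), ENNReal.ofReal_inv_of_pos two_pos,
      ENNReal.inv_pow]
    norm_num
  have hC : ENNReal.ofReal ((2:ℝ) ^ ((N:ℝ) + q)) = 2 ^ N * (2:ℝ≥0∞) ^ q := by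
    rw [Real.rpow_add two_pos, ENNReal.ofReal_mul (by positivity)]
    congr 1
    · rw [Real.rpow_natCast, ENNReal.ofReal_pow (by norm_num : (0:ℝ) ≤ 2)]
      norm_num
    · rw [← ENNReal.ofReal_rpow_of_pos two_pos]
      norm_num
  have hFk : F k ≤ (2 ^ N * (2:ℝ≥0∞) ^ q / V) * J := by
    have hp0 : ((2:ℝ≥0∞) ^ N)⁻¹ ≠ 0 := ENNReal.inv_ne_zero.2 (ENNReal.pow_ne_top ENNReal.ofNat_ne_top)
    have hpT : ((2:ℝ≥0∞) ^ N)⁻¹ ≠ ∞ := ENNReal.inv_ne_top.2 (pow_ne_zero _ two_ne_zero)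
    have hb0 : ((2:ℝ≥0∞) ^ N)⁻¹ * V ≠ 0 := mul_ne_zero hp0 hV0
    have hbT : ((2:ℝ≥0∞) ^ N)⁻¹ * V ≠ ∞ := ENNReal.mul_ne_top hpT hVT
    rw [hhalf] at havg
    have h := (ENNReal.le_div_iff_mul_le (Or.inl hb0) (Or.inl hbT)).2 havg
    calc F k ≤ (2 ^ q * J) / (((2:ℝ≥0∞) ^ N)⁻¹ * V) := h
      _ = (2 ^ N * (2:ℝ≥0∞) ^ q / V) * J := by
          rw [div_eq_mul_inv, ENNReal.mul_inv (Or.inl hp0) (Or.inl hpT), inv_inv,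
            div_eq_mul_inv]
          ring
  -- final assembly
  rw [hFeq k, hC]
  have hcongr : (∫⁻ z in ball (0 : EuclideanSpace ℝ (Fin N)) 1,
      (∫⁻ x, ENNReal.ofReal (‖u (x + ε • z) - u x‖ ^ q)) / ENNReal.ofReal (ε * ‖z‖)) =
      ∫⁻ z in ball (0 : EuclideanSpace ℝ (Fin N)) 1, F z / ENNReal.ofReal (ε * ‖z‖) :=
    lintegral_congr fun z => by rw [hFeq z]
  rw [hcongr]
  have hmono : J / e ≤ ∫⁻ z in ball (0 : EuclideanSpace ℝ (Fin N)) 1,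
      F z / ENNReal.ofReal (ε * ‖z‖) := by
    have h1 : J / e = ∫⁻ z in ball (0 : EuclideanSpace ℝ (Fin N)) 1, F z / e := by
      simp_rw [div_eq_mul_inv]
      rw [lintegral_mul_const' _ _ (ENNReal.inv_ne_top.2 he0)]
    rw [h1]
    refine setLIntegral_mono (hmeas.div ((measurable_norm.const_mul ε).ennreal_ofReal)) ?_
    intro z hz
    refine ENNReal.div_le_div_left (ENNReal.ofReal_le_ofReal ?_) _
    have hz1 : ‖z‖ < 1 := mem_ball_zero_iff.1 hz
    nlinarith [norm_nonneg z]
  calc F k / e = F k * e⁻¹ := by rw [div_eq_mul_inv]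
    _ ≤ ((2 ^ N * (2:ℝ≥0∞) ^ q / V) * J) * e⁻¹ := mul_le_mul_left hFk _
    _ = (2 ^ N * (2:ℝ≥0∞) ^ q / V) * (J / e) := by rw [mul_assoc, div_eq_mul_inv J e]
    _ ≤ (2 ^ N * (2:ℝ≥0∞) ^ q / V) *
        ∫⁻ z in ball (0 : EuclideanSpace ℝ (Fin N)) 1, F z / ENNReal.ofReal (ε * ‖z‖) :=
      mul_le_mul_right hmono _
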